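/- Let T > 0, α ∈ (0,1), n ∈ ℕ, and let x : [0,T] → ℝ^n satisfy the representation x(τ) = x(0) + (1/Γ(α)) ∫_0^τ (τ - ξ)^{α-1} f(ξ) dξ for all τ ∈ [0,T], where f : [0,T] → ℝ^n is measurable with ‖f(ξ)‖ ≤ μ for a.e. ξ. Then for any 0 ≤ t ≤ t' < T and any τ ∈ (t', T], defining z(ξ) = ∫_t^ξ f(η) dη and a(τ | t) = x(0) + (1/Γ(α)) ∫_0^t (τ - ξ)^{α-1} f(ξ) dξ, one has ‖a(τ | t') - a(τ | t) - z(t')/(Γ(α)(τ - t)^{1-α})‖ ≤ 2μ (t' - t)^{2-α} / (Γ(α) (τ - t')^{2-2α}). -/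

import Mathlib

open MeasureTheory Set

/-- Tangent-line inequality for `x ↦ x ^ p` with negative exponent. -/
lemma rpow_tangent_aux {a b p : ℝ} (ha : 0 < a) (hab : a ≤ b) (hp : p < 0) :
    a ^ p - b ^ p ≤ (-p) * a ^ (p - 1) * (b - a) := by
  rcases eq_or_lt_of_le hab with rfl | hab'
  · simp
  obtain ⟨c, hc, hslope⟩ := exists_hasDerivAt_eq_slope (fun x => x ^ p)
      (fun x => p * x ^ (p - 1)) hab'
      (by
        apply ContinuousOn.rpow_const continuousOn_id
        intro x hx
        exact Or.inl (ha.trans_le hx.1).ne')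
      (fun x hx => Real.hasDerivAt_rpow_const (Or.inl (ha.trans hx.1).ne'))
  have hc0 : 0 < c := ha.trans hc.1
  have hba : 0 < b - a := by linarith
  have heq : a ^ p - b ^ p = (-p) * c ^ (p - 1) * (b - a) := by
    have := (div_eq_iff hba.ne').mp hslope.symm
    linarith [this]
  rw [heq]
  have hcc : c ^ (p - 1) ≤ a ^ (p - 1) :=
    Real.rpow_le_rpow_of_nonpos ha hc.1.le (by linarith)
  have hnp : 0 < -p := by linarith
  exact mul_le_mul_of_nonneg_right (mul_le_mul_of_nonneg_left hcc hnp.le) hba.le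

set_option maxHeartbeats 1000000 in
/-- First-order expansion, with singular remainder, of the frozen-history map
`t ↦ a(τ | t)` for a fractional absolutely continuous function `x`. -/
theorem stmt3 (T α : ℝ) (hT : 0 < T) (hα : α ∈ Set.Ioo (0 : ℝ) 1) (n : ℕ)
    (x f : ℝ → EuclideanSpace ℝ (Fin n)) (μ : ℝ) (hμ : 0 ≤ μ)
    (hf_meas : Measurable f)
    (hf_bd : ∀ᵐ ξ ∂(volume.restrict (Set.Icc (0:ℝ) T)), ‖f ξ‖ ≤ μ)
    (hx : ∀ τ ∈ Set.Icc (0:ℝ) T,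
      x τ = x 0 + (1 / Real.Gamma α) • ∫ ξ in (0:ℝ)..τ, ((τ - ξ) ^ (α - 1)) • f ξ)
    (t t' : ℝ) (h0t : 0 ≤ t) (htt' : t ≤ t') (ht'T : t' < T)
    (τ : ℝ) (hτ : τ ∈ Set.Ioc t' T) :
    ‖(x 0 + (1 / Real.Gamma α) • ∫ ξ in (0:ℝ)..t', ((τ - ξ) ^ (α - 1)) • f ξ) -
        (x 0 + (1 / Real.Gamma α) • ∫ ξ in (0:ℝ)..t, ((τ - ξ) ^ (α - 1)) • f ξ) -
        (1 / (Real.Gamma α * (τ - t) ^ (1 - α))) • ∫ η in t..t', f η‖ ≤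
      2 * μ * (t' - t) ^ (2 - α) / (Real.Gamma α * (τ - t') ^ (2 - 2 * α)) := by
  obtain ⟨hα0, hα1⟩ := hα
  obtain ⟨ht'τ, hτT⟩ := hτ
  have hΓ : 0 < Real.Gamma α := Real.Gamma_pos_of_pos hα0
  have hA : 0 < τ - t' := by linarith
  -- trivial case t = t'
  rcases eq_or_lt_of_le htt' with rfl | hB
  · simp only [intervalIntegral.integral_same, smul_zero, sub_self, sub_zero, norm_zero]
    rw [Real.zero_rpow (by linarith : (2:ℝ) - α ≠ 0)]
    simp
  have hBpos : 0 < t' - t := by linarith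
  have htτ : 0 < τ - t := by linarith
  -- a.e. bound on subintervals
  have hf_ae : ∀ {a b : ℝ}, 0 ≤ a → b ≤ t' →
      ∀ᵐ ξ ∂(volume.restrict (Set.Ioc a b)), ‖f ξ‖ ≤ μ := by
    intro a b ha hb
    refine ae_restrict_of_ae_restrict_of_subset ?_ hf_bd
    intro ξ hξ
    exact ⟨le_trans ha hξ.1.le, le_trans hξ.2 (le_trans hb ht'T.le)⟩
  -- integrability of f on subintervals of [0, t']
  have hfint : ∀ a b : ℝ, 0 ≤ a → a ≤ b → b ≤ t' → IntervalIntegrable f volume a b := by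
    intro a b ha hab hb
    rw [intervalIntegrable_iff_integrableOn_Ioc_of_le hab]
    exact Integrable.mono' (integrableOn_const measure_Ioc_lt_top.ne)
      hf_meas.aestronglyMeasurable (hf_ae ha hb)
  -- measurability of the kernel-weighted function
  have hFmeas : Measurable (fun ξ => ((τ - ξ) ^ (α - 1)) • f ξ) := by
    have h1 : Measurable fun ξ : ℝ => (τ - ξ) ^ (α - 1) := by fun_prop
    exact h1.smul hf_meas
  -- integrability of the kernel-weighted function on subintervals of [0, t']
  have hFint : ∀ a b : ℝ, 0 ≤ a → a ≤ b → b ≤ t' →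
      IntervalIntegrable (fun ξ => ((τ - ξ) ^ (α - 1)) • f ξ) volume a b := by
    intro a b ha hab hb
    rw [intervalIntegrable_iff_integrableOn_Ioc_of_le hab]
    refine Integrable.mono' (g := fun _ => (τ - t') ^ (α - 1) * μ)
      (integrableOn_const measure_Ioc_lt_top.ne) hFmeas.aestronglyMeasurable ?_
    filter_upwards [hf_ae ha hb, ae_restrict_mem measurableSet_Ioc] with ξ hξ hmem
    have hξτ : 0 < τ - ξ := by
      have : ξ ≤ t' := le_trans hmem.2 hb
      linarith
    rw [norm_smul, Real.norm_eq_abs, abs_of_nonneg (Real.rpow_nonneg hξτ.le _)]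
    refine mul_le_mul ?_ hξ (norm_nonneg _) (Real.rpow_nonneg hA.le _)
    exact Real.rpow_le_rpow_of_nonpos hA (by linarith [le_trans hmem.2 hb]) (by linarith)
  -- splitting the integral
  have hsplit : (∫ ξ in (0:ℝ)..t, ((τ - ξ) ^ (α - 1)) • f ξ) +
      (∫ ξ in t..t', ((τ - ξ) ^ (α - 1)) • f ξ) =
      ∫ ξ in (0:ℝ)..t', ((τ - ξ) ^ (α - 1)) • f ξ :=
    intervalIntegral.integral_add_adjacent_intervals
      (hFint 0 t le_rfl h0t htt') (hFint t t' h0t htt' le_rfl)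
  -- the coefficient identity
  have hc : 1 / (Real.Gamma α * (τ - t) ^ (1 - α)) = (1 / Real.Gamma α) * (τ - t) ^ (α - 1) := by
    rw [show α - 1 = -(1 - α) by ring, Real.rpow_neg htτ.le]
    rw [one_div, mul_inv, one_div]
  -- rewriting the main vector
  have key : (x 0 + (1 / Real.Gamma α) • ∫ ξ in (0:ℝ)..t', ((τ - ξ) ^ (α - 1)) • f ξ) -
      (x 0 + (1 / Real.Gamma α) • ∫ ξ in (0:ℝ)..t, ((τ - ξ) ^ (α - 1)) • f ξ) -
      (1 / (Real.Gamma α * (τ - t) ^ (1 - α))) • ∫ η in t..t', f η =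
      (1 / Real.Gamma α) • ∫ ξ in t..t',
        (((τ - ξ) ^ (α - 1) - (τ - t) ^ (α - 1)) • f ξ) := by
    have h2 : ∫ ξ in t..t', (((τ - ξ) ^ (α - 1) - (τ - t) ^ (α - 1)) • f ξ) =
        (∫ ξ in t..t', ((τ - ξ) ^ (α - 1)) • f ξ) -
          ((τ - t) ^ (α - 1)) • ∫ η in t..t', f η := by
      have hgint : IntervalIntegrable (fun ξ => ((τ - t) ^ (α - 1)) • f ξ) volume t t' :=
        (hfint t t' h0t htt' le_rfl).smul ((τ - t) ^ (α - 1))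
      simp only [sub_smul]
      rw [intervalIntegral.integral_sub (hFint t t' h0t htt' le_rfl) hgint]
      rw [intervalIntegral.integral_smul]
    rw [h2, hc, smul_sub, mul_smul, ← hsplit, smul_add]
    abel
  rw [key, norm_smul, Real.norm_eq_abs, abs_of_pos (by positivity : (0:ℝ) < 1 / Real.Gamma α)]
  -- rewrite the right-hand side
  set A := τ - t' with hAdef
  set B := t' - t with hBdef
  have hrhs : 2 * μ * B ^ (2 - α) / (Real.Gamma α * A ^ (2 - 2 * α)) =
      (1 / Real.Gamma α) * (2 * μ * B ^ (2 - α) * A ^ (2 * α - 2)) := by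
    rw [show 2 * α - 2 = -(2 - 2 * α) by ring, Real.rpow_neg hA.le]
    have hApow : (0:ℝ) < A ^ (2 - 2 * α) := Real.rpow_pos_of_pos hA _
    field_simp
  rw [hrhs]
  refine mul_le_mul_of_nonneg_left ?_ (by positivity)
  -- now bound the integral, in two cases
  have hBA1 : A ^ (α - 1) = A ^ (2 * α - 2) * A ^ (1 - α) := by
    rw [← Real.rpow_add hA]; ring_nf
  rcases le_total A B with hcase | hcase
  · -- case A ≤ B : use the crude bound (τ - ξ)^(α-1) ≤ A^(α-1)
    have hbd : ‖∫ ξ in t..t', (((τ - ξ) ^ (α - 1) - (τ - t) ^ (α - 1)) • f ξ)‖ ≤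
        |∫ _ξ in t..t', (A ^ (α - 1) * μ)| := by
      refine intervalIntegral.norm_integral_le_abs_of_norm_le ?_
        (intervalIntegrable_const)
      rw [Set.uIoc_of_le htt']
      filter_upwards [hf_ae h0t (le_refl t'), ae_restrict_mem measurableSet_Ioc] with ξ hξ hmem
      have hξτ : 0 < τ - ξ := by linarith [hmem.2]
      rw [norm_smul, Real.norm_eq_abs]
      have h2 : (τ - t) ^ (α - 1) ≤ (τ - ξ) ^ (α - 1) :=
        Real.rpow_le_rpow_of_nonpos hξτ (by linarith [hmem.1]) (by linarith)
      have h3 : (τ - ξ) ^ (α - 1) ≤ A ^ (α - 1) :=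
        Real.rpow_le_rpow_of_nonpos hA (by linarith [hmem.2]) (by linarith)
      rw [abs_of_nonneg (by linarith)]
      refine mul_le_mul ?_ hξ (norm_nonneg _) (Real.rpow_nonneg hA.le _)
      have h4 : (0:ℝ) ≤ (τ - t) ^ (α - 1) := Real.rpow_nonneg htτ.le _
      linarith
    refine le_trans hbd ?_
    rw [intervalIntegral.integral_const, smul_eq_mul,
      abs_of_nonneg (by positivity : (0:ℝ) ≤ (t' - t) * (A ^ (α - 1) * μ))]
    -- (t' - t) = B
    have hAB : A ^ (1 - α) ≤ B ^ (1 - α) := Real.rpow_le_rpow hA.le hcase (by linarith)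
    have hB2 : B ^ (2 - α) = B * B ^ (1 - α) := by
      rw [show (2:ℝ) - α = 1 + (1 - α) by ring, Real.rpow_add hBpos, Real.rpow_one]
    rw [show t' - t = B from rfl, hB2, hBA1]
    have h5 : (0:ℝ) ≤ A ^ (2 * α - 2) := Real.rpow_nonneg hA.le _
    have h6 : (0:ℝ) ≤ B ^ (1 - α) := Real.rpow_nonneg hBpos.le _
    have h7 : (0:ℝ) ≤ A ^ (1 - α) := Real.rpow_nonneg hA.le _
    have h8 := mul_le_mul_of_nonneg_left hAB
      (mul_nonneg (mul_nonneg hμ hBpos.le) h5)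
    nlinarith [h8, mul_nonneg (mul_nonneg (mul_nonneg hμ hBpos.le) h5) h6]
  · -- case B ≤ A : use the tangent-line bound
    have hbd : ‖∫ ξ in t..t', (((τ - ξ) ^ (α - 1) - (τ - t) ^ (α - 1)) • f ξ)‖ ≤
        |∫ ξ in t..t', (μ * ((1 - α) * A ^ (α - 2))) * (ξ - t)| := by
      refine intervalIntegral.norm_integral_le_abs_of_norm_le ?_ ?_
      · rw [Set.uIoc_of_le htt']
        filter_upwards [hf_ae h0t (le_refl t'), ae_restrict_mem measurableSet_Ioc] with ξ hξ hmem
        have hξτ : 0 < τ - ξ := by linarith [hmem.2]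
        rw [norm_smul, Real.norm_eq_abs]
        have h2 : (τ - t) ^ (α - 1) ≤ (τ - ξ) ^ (α - 1) :=
          Real.rpow_le_rpow_of_nonpos hξτ (by linarith [hmem.1]) (by linarith)
        rw [abs_of_nonneg (by linarith)]
        have htan : (τ - ξ) ^ (α - 1) - (τ - t) ^ (α - 1) ≤
            (1 - α) * (τ - ξ) ^ (α - 2) * (ξ - t) := by
          have := rpow_tangent_aux (a := τ - ξ) (b := τ - t) (p := α - 1) hξτ
            (by linarith [hmem.1]) (by linarith)
          have heq : -(α - 1) = 1 - α := by ring
          have heq2 : α - 1 - 1 = α - 2 := by ring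
          rw [heq, heq2] at this
          have heq3 : (τ - t) - (τ - ξ) = ξ - t := by ring
          rw [heq3] at this
          exact this
        have h4 : (τ - ξ) ^ (α - 2) ≤ A ^ (α - 2) :=
          Real.rpow_le_rpow_of_nonpos hA (by linarith [hmem.2]) (by linarith)
        have hξt : 0 ≤ ξ - t := by linarith [hmem.1]
        have h1α : (0:ℝ) ≤ 1 - α := by linarith
        have h5 : (1 - α) * (τ - ξ) ^ (α - 2) * (ξ - t) ≤ (1 - α) * A ^ (α - 2) * (ξ - t) :=
          mul_le_mul_of_nonneg_right (mul_le_mul_of_nonneg_left h4 h1α) hξt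
        calc ((τ - ξ) ^ (α - 1) - (τ - t) ^ (α - 1)) * ‖f ξ‖
            ≤ ((1 - α) * A ^ (α - 2) * (ξ - t)) * μ := by
              refine mul_le_mul (le_trans htan h5) hξ (norm_nonneg _) ?_
              have : (0:ℝ) ≤ A ^ (α - 2) := Real.rpow_nonneg hA.le _
              nlinarith
          _ = (μ * ((1 - α) * A ^ (α - 2))) * (ξ - t) := by ring
      · exact ((continuous_const.mul (continuous_id.sub continuous_const)).intervalIntegrable _ _)
    refine le_trans hbd ?_
    have hint : ∫ ξ in t..t', (μ * ((1 - α) * A ^ (α - 2))) * (ξ - t) =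
        (μ * ((1 - α) * A ^ (α - 2))) * (B ^ 2 / 2) := by
      rw [intervalIntegral.integral_const_mul]
      congr 1
      have h1 : ∫ ξ in t..t', (ξ - t) = ∫ u in (t - t)..(t' - t), u :=
        intervalIntegral.integral_comp_sub_right (fun u => u) t
      rw [h1, show t - t = (0:ℝ) by ring, integral_id, show t' - t = B from rfl]
      norm_num
    rw [hint]
    have hApow2 : (0:ℝ) ≤ A ^ (α - 2) := Real.rpow_nonneg hA.le _
    rw [abs_of_nonneg (mul_nonneg (mul_nonneg hμ
      (mul_nonneg (by linarith) hApow2)) (by positivity))]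
    -- final numeric inequality
    have haux1 : (B:ℝ) ^ (2:ℕ) = B ^ ((2:ℝ) - α) * B ^ α := by
      rw [← Real.rpow_add hBpos, ← Real.rpow_natCast B 2]
      norm_num
    have haux2 : A ^ (α - 2) = A ^ (2 * α - 2) * A ^ (-α) := by
      rw [← Real.rpow_add hA]; ring_nf
    have hC : A ^ (-α) * B ^ α ≤ 1 := by
      rw [Real.rpow_neg hA.le]
      rw [inv_mul_le_iff₀ (Real.rpow_pos_of_pos hA α), mul_one]
      exact Real.rpow_le_rpow hBpos.le hcase hα0.le
    have hCnn : (0:ℝ) ≤ A ^ (-α) * B ^ α :=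
      mul_nonneg (Real.rpow_nonneg hA.le _) (Real.rpow_nonneg hBpos.le _)
    calc μ * ((1 - α) * A ^ (α - 2)) * (B ^ 2 / 2)
        = (μ * B ^ ((2:ℝ) - α) * A ^ (2 * α - 2)) * ((1 - α) / 2 * (A ^ (-α) * B ^ α)) := by
          rw [haux2]
          rw [show (B:ℝ) ^ 2 = B ^ (2:ℕ) by norm_num, haux1]
          ring
      _ ≤ (μ * B ^ ((2:ℝ) - α) * A ^ (2 * α - 2)) * 2 := by
          refine mul_le_mul_of_nonneg_left ?_ (by positivity)
          nlinarith
      _ = 2 * μ * B ^ (2 - α) * A ^ (2 * α - 2) := by ring
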